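/- Define g(x) = ⌊(x+24)/13⌋. If u is a factor of f^ω(0) and g^t(|u|) ≤ 2, then u is equivalent under the cyclic shift σ to a factor of the prefix of f^ω(0) of length 13^t·11. -/

import Mathlib

/-- The image of 0 under the morphism: 0740103050260. -/
def f0 : List (Fin 8) := [0,7,4,0,1,0,3,0,5,0,2,6,0]

/-- The cyclic shift morphism σ, sending each letter a to a+1 (mod 8). -/
def sigmaW (w : List (Fin 8)) : List (Fin 8) := w.map (· + 1)

/-- The image of a letter under the cyclic morphism f: f(a) = σ^a(f(0)). -/
def fL (a : Fin 8) : List (Fin 8) := f0.map (· + a)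

/-- The morphism f extended to words. -/
def fW (w : List (Fin 8)) : List (Fin 8) := w.flatMap fL

/-- f^n(0). -/
def fIter (n : ℕ) : List (Fin 8) := fW^[n] [0]

/-- u is a factor of the fixed point f^ω(0): since f^n(0) is a prefix of
f^{n+1}(0), this holds iff u is a factor of some f^n(0). -/
def FactorFP (u : List (Fin 8)) : Prop := ∃ n, u <:+: fIter n

/-- A letter of Σ ∪ {ε} viewed as a word. -/
def optL (a : Option (Fin 8)) : List (Fin 8) := a.elim [] (fun x => [x])

/-- The image under f of an element of Σ ∪ {ε}. -/
def imgF (a : Option (Fin 8)) : List (Fin 8) := a.elim [] fL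

/-- g(x) = ⌊(x+24)/13⌋. -/
def g (x : ℕ) : ℕ := (x + 24) / 13

/-! ### Auxiliary lemmas -/

open scoped Fin.NatCast Fin.CommRing

lemma lenfL (a : Fin 8) : (fL a).length = 13 := by simp [fL, f0]

lemma fW_append (a b : List (Fin 8)) : fW (a ++ b) = fW a ++ fW b :=
  List.flatMap_append

lemma lenfW (w : List (Fin 8)) : (fW w).length = 13 * w.length := by
  induction w with
  | nil => simp [fW]
  | cons a l ih =>
    have : fW (a :: l) = fL a ++ fW l := rfl
    rw [this, List.length_append, lenfL, ih]
    simp [List.length_cons]; ring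

lemma fW_infix {u v : List (Fin 8)} (h : u <:+: v) : fW u <:+: fW v := by
  obtain ⟨s, t, rfl⟩ := h
  exact ⟨fW s, fW t, by rw [← fW_append, ← fW_append]⟩

lemma fW_prefix {u v : List (Fin 8)} (h : u <+: v) : fW u <+: fW v := by
  obtain ⟨t, rfl⟩ := h
  exact ⟨fW t, (fW_append u t).symm⟩

lemma fIter_succ (n : ℕ) : fIter (n + 1) = fW (fIter n) :=
  Function.iterate_succ_apply' fW n [0]

lemma lenfIter (n : ℕ) : (fIter n).length = 13 ^ n := by
  induction n with
  | zero => rfl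
  | succ n ih => rw [fIter_succ, lenfW, ih, pow_succ]; ring

lemma fIter_prefix_succ (n : ℕ) : fIter n <+: fIter (n + 1) := by
  induction n with
  | zero => rw [fIter_succ]; decide
  | succ n ih => rw [fIter_succ, fIter_succ]; exact fW_prefix ih

lemma fIter_prefix {m n : ℕ} (h : m ≤ n) : fIter m <+: fIter n := by
  induction n with
  | zero => simpa [Nat.le_zero.mp h]
  | succ n ih =>
    rcases Nat.lt_or_ge m (n + 1) with h' | h'
    · exact (ih (Nat.lt_succ_iff.mp h')).trans (fIter_prefix_succ n)
    · have : m = n + 1 := le_antisymm h h'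
      simp [this]

lemma take_fIter_le {m n L : ℕ} (hmn : m ≤ n) (hL : L ≤ 13 ^ m) :
    (fIter m).take L = (fIter n).take L := by
  obtain ⟨c, hc⟩ := fIter_prefix hmn
  rw [← hc, List.take_append, lenfIter,
    Nat.sub_eq_zero_of_le hL, List.take_zero, List.append_nil]

lemma take_fIter_eq {m n L : ℕ} (hm : L ≤ 13 ^ m) (hn : L ≤ 13 ^ n) :
    (fIter m).take L = (fIter n).take L := by
  rcases le_total m n with h | h
  · exact take_fIter_le h hm
  · exact (take_fIter_le h hn).symm

lemma fW_take (w : List (Fin 8)) (L : ℕ) :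
    fW (w.take L) = (fW w).take (13 * L) := by
  induction w generalizing L with
  | nil => simp [fW]
  | cons a l ih =>
    cases L with
    | zero => simp [fW]
    | succ L =>
      have h1 : fW (a :: l) = fL a ++ fW l := rfl
      have h2 : fW (a :: l.take L) = fL a ++ fW (l.take L) := rfl
      have h3 : 13 * (L + 1) - 13 = 13 * L := by omega
      have h4 : (fL a).take (13 * (L + 1)) = fL a :=
        List.take_of_length_le (by rw [lenfL]; omega)
      rw [List.take_succ_cons, h2, ih, h1, List.take_append,
        lenfL, h3, h4]

/-! ### sigma lemmas -/

lemma sigma_iterate (i : ℕ) (w : List (Fin 8)) :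
    sigmaW^[i] w = w.map (· + (i : Fin 8)) := by
  induction i with
  | zero => simp
  | succ i ih =>
    rw [Function.iterate_succ_apply', ih]
    simp only [sigmaW, List.map_map]
    congr 1
    funext x
    simp only [Function.comp]
    push_cast
    ring

lemma sigma_infix {u v : List (Fin 8)} (i : ℕ) (h : u <:+: v) :
    sigmaW^[i] u <:+: sigmaW^[i] v := by
  rw [sigma_iterate, sigma_iterate]
  exact h.map _

lemma natCast_fin8_zero {n : ℕ} (h : n % 8 = 0) : ((n : ℕ) : Fin 8) = 0 := by
  obtain ⟨k, rfl⟩ := Nat.dvd_of_mod_eq_zero h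
  rw [Nat.cast_mul]
  have : ((8 : ℕ) : Fin 8) = 0 := by decide
  rw [this, zero_mul]

lemma sigma_cancel {i j : ℕ} (h : (i + j) % 8 = 0) (w : List (Fin 8)) :
    sigmaW^[i] (sigmaW^[j] w) = w := by
  rw [sigma_iterate, sigma_iterate, List.map_map]
  have hc : ((j : Fin 8) + (i : Fin 8)) = 0 := by
    rw [← Nat.cast_add, ← natCast_fin8_zero h]
    congr 1
    omega
  have : ((· + (i : Fin 8)) ∘ (· + (j : Fin 8))) = fun x : Fin 8 => x := by
    funext x
    simp [Function.comp, add_assoc, hc]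
  rw [this, List.map_id']

lemma fW_sigma (w : List (Fin 8)) : fW (sigmaW w) = sigmaW (fW w) := by
  simp only [fW, sigmaW, List.flatMap_map, List.map_flatMap]
  congr 1
  funext a
  simp only [fL, List.map_map]
  congr 1
  funext x
  simp [Function.comp, add_assoc]

lemma fW_sigma_iter (i : ℕ) (w : List (Fin 8)) :
    fW (sigmaW^[i] w) = sigmaW^[i] (fW w) := by
  induction i generalizing w with
  | zero => rfl
  | succ i ih =>
    rw [Function.iterate_succ_apply, Function.iterate_succ_apply, ih, fW_sigma]

/-! ### decomposition lemma -/

lemma decomp_aux : ∀ n (w : List (Fin 8)), w.length ≤ n → ∀ u, u <:+: fW w →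
    ∃ w', w' <:+: w ∧ u <:+: fW w' ∧ 13 * w'.length ≤ u.length + 24 := by
  intro n
  induction n with
  | zero =>
    intro w hw u hu
    exact ⟨w, List.infix_rfl, hu, by have := Nat.le_zero.mp hw; omega⟩
  | succ n ih =>
    intro w hw u hu
    by_cases hc : 13 * w.length ≤ u.length + 24
    · exact ⟨w, List.infix_rfl, hu, hc⟩
    · push_neg at hc
      obtain ⟨s, t, hst⟩ := hu
      have hlen : s.length + u.length + t.length = 13 * w.length := by
        have := congrArg List.length hst
        simp only [List.length_append, lenfW] at this
        omega
      rcases Nat.lt_or_ge s.length 13 with hs | hs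
      · -- t.length ≥ 13 : drop the last letter of w
        have ht : 13 ≤ t.length := by omega
        rcases List.eq_nil_or_concat w with rfl | ⟨l, a, rfl⟩
        · simp at hc
        · rw [List.concat_eq_append] at *
          have hfw : fW (l ++ [a]) = fW l ++ fL a := fW_append l [a]
          have hsu : s ++ u <+: fW l := by
            have h1 : s.length + u.length ≤ (fW l).length := by
              rw [lenfW]
              simp only [List.length_append, List.length_cons,
                List.length_nil] at hlen ⊢
              omega
            have h2 : (s ++ u ++ t).take (s.length + u.length) = s ++ u := by
              rw [List.take_append, List.length_append]
              simp
            have h3 : (fW l ++ fL a).take (s.length + u.length)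
                = (fW l).take (s.length + u.length) := by
              rw [List.take_append,
                Nat.sub_eq_zero_of_le h1, List.take_zero, List.append_nil]
            rw [← h2, hst, hfw, h3]
            exact List.take_prefix _ _
          have hul : u <:+: fW l :=
            ((List.suffix_append s u).isInfix).trans hsu.isInfix
          have hlength : l.length ≤ n := by
            simp only [List.length_append, List.length_cons,
              List.length_nil] at hw
            omega
          obtain ⟨w', hw1, hw2, hw3⟩ := ih l hlength u hul
          exact ⟨w', hw1.trans (List.prefix_append l [a]).isInfix, hw2, hw3⟩
      · -- s.length ≥ 13 : drop the first letter of w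
        cases w with
        | nil => simp at hc
        | cons a l =>
          have hfw : fW (a :: l) = fL a ++ fW l := rfl
          have hul : u <:+: fW l := by
            have h1 : (fL a ++ fW l).drop 13 = fW l := by
              rw [List.drop_append, lenfL]
              simp [lenfL]
            have h2 : (s ++ u ++ t).drop 13 = s.drop 13 ++ u ++ t := by
              rw [List.append_assoc, List.drop_append,
                Nat.sub_eq_zero_of_le hs, List.drop_zero, List.append_assoc]
            have h4 : (s ++ u ++ t).drop 13 = fW l := by rw [hst, hfw, h1]
            exact ⟨s.drop 13, t, by rw [← h2, h4]⟩
          have hlength : l.length ≤ n := by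
            simp only [List.length_cons] at hw; omega
          obtain ⟨w', hw1, hw2, hw3⟩ := ih l hlength u hul
          exact ⟨w', hw1.trans (List.suffix_cons a l).isInfix, hw2, hw3⟩

lemma decompFP (u : List (Fin 8)) (h : FactorFP u) :
    ∃ u', FactorFP u' ∧ u <:+: fW u' ∧ u'.length ≤ g u.length := by
  obtain ⟨n, hu⟩ := h
  have hu' : u <:+: fW (fIter n) := by
    rw [← fIter_succ]
    exact hu.trans (fIter_prefix_succ n).isInfix
  obtain ⟨w', h1, h2, h3⟩ := decomp_aux (fIter n).length (fIter n) le_rfl u hu'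
  refine ⟨w', ⟨n, h1⟩, h2, ?_⟩
  rw [g, Nat.le_div_iff_mul_le (by norm_num)]
  omega

/-! ### 2-letter factors -/

def Sset : List (Fin 8) := [1,2,3,4,5,7]

lemma pair_fL : ∀ (a x y : Fin 8), [x,y] <:+: fL a → (y - x) ∈ Sset := by
  decide

lemma straddle {α : Type*} (u v : List α) (x y : α) (h : [x,y] <:+: u ++ v) :
    [x,y] <:+: u ∨ [x,y] <:+: v ∨ (u.getLast? = some x ∧ v.head? = some y) := by
  induction u with
  | nil => right; left; simpa using h
  | cons c u' ih =>
    rw [List.cons_append, List.infix_cons_iff] at h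
    rcases h with h | h
    · rw [List.cons_prefix_cons] at h
      obtain ⟨rfl, hy⟩ := h
      cases u' with
      | nil =>
        right; right
        refine ⟨rfl, ?_⟩
        cases v with
        | nil => simp at hy
        | cons d v' =>
          rw [List.nil_append, List.cons_prefix_cons] at hy
          simp [hy.1]
      | cons d u'' =>
        left
        rw [List.cons_append, List.cons_prefix_cons] at hy
        obtain ⟨rfl, _⟩ := hy
        exact ⟨[], u'', by simp⟩
    · rcases ih h with h' | h' | h'
      · left; exact h'.trans (List.suffix_cons c u').isInfix
      · right; left; exact h'
      · right; right
        refine ⟨?_, h'.2⟩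
        obtain ⟨ys, rfl⟩ := List.getLast?_eq_some_iff.mp h'.1
        rw [← List.cons_append]
        exact List.getLast?_concat

lemma pair_fW : ∀ (w : List (Fin 8)) (x y : Fin 8), [x,y] <:+: fW w →
    (y - x) ∈ Sset ∨ ∃ a b, [a,b] <:+: w ∧ y - x = b - a := by
  intro w
  induction w with
  | nil =>
    intro x y h
    have := h.length_le
    simp [fW] at this
  | cons a l ih =>
    intro x y h
    have hfw : fW (a :: l) = fL a ++ fW l := rfl
    rw [hfw] at h
    rcases straddle _ _ _ _ h with h' | h' | ⟨h1, h2⟩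
    · exact Or.inl (pair_fL a x y h')
    · rcases ih x y h' with h'' | ⟨a', b', hab, hd⟩
      · exact Or.inl h''
      · exact Or.inr ⟨a', b', hab.trans (List.suffix_cons a l).isInfix, hd⟩
    · -- x is the last letter of fL a, i.e. x = a; y is head of fW l
      have hx : x = a := by
        have : (fL a).getLast? = some a := by
          simp [fL, f0]
        rw [this] at h1
        exact (Option.some_inj.mp h1).symm
      cases l with
      | nil => simp [fW] at h2
      | cons b l' =>
        have hy : y = b := by
          have hfwl : fW (b :: l') = fL b ++ fW l' := rfl
          have hh : (fL b).head? = some b := by simp [fL, f0]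
          rw [hfwl, List.head?_append, hh] at h2
          simp at h2
          exact h2.symm
        exact Or.inr ⟨a, b, ⟨[], l', by simp⟩, by rw [hx, hy]⟩

lemma pair_fIter : ∀ (n : ℕ) (x y : Fin 8), [x,y] <:+: fIter n →
    (y - x) ∈ Sset := by
  intro n
  induction n with
  | zero =>
    intro x y h
    have := h.length_le
    simp [fIter] at this
  | succ n ih =>
    intro x y h
    rw [fIter_succ] at h
    rcases pair_fW (fIter n) x y h with h' | ⟨a, b, hab, hd⟩
    · exact h'
    · rw [hd]; exact ih a b hab

/-! ### the prefix -/

lemma pre_zero : (fIter (13 ^ 0 * 11)).take (13 ^ 0 * 11)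
    = [0,7,4,0,1,0,3,0,5,0,2] := by
  norm_num
  have h1 : (fIter 11).take 11 = (fIter 1).take 11 := by
    apply take_fIter_eq
    · calc (11:ℕ) ≤ 13 ^ 1 := by norm_num
        _ ≤ 13 ^ 11 := Nat.pow_le_pow_right (by norm_num) (by norm_num)
    · norm_num
  rw [h1]
  decide

lemma fW_pre (t : ℕ) :
    fW ((fIter (13 ^ t * 11)).take (13 ^ t * 11))
    = (fIter (13 ^ (t+1) * 11)).take (13 ^ (t+1) * 11) := by
  set M := 13 ^ t * 11 with hM
  have hM0 : 0 < M := by positivity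
  have hM1 : 1 ≤ M := hM0
  have h13 : 13 ^ (t+1) * 11 = 13 * M := by rw [hM, pow_succ]; ring
  rw [fW_take, ← fIter_succ, h13]
  apply take_fIter_eq
  · have hMp : M ≤ 13 ^ M := le_of_lt (Nat.lt_pow_self (n := M) (by norm_num))
    calc 13 * M ≤ 13 * 13 ^ M := by omega
      _ = 13 ^ (M + 1) := by rw [pow_succ]; ring
  · exact le_of_lt (Nat.lt_pow_self (n := 13 * M) (by norm_num))

lemma pair_case (x d a b : Fin 8) (hd : b - a = d)
    (hinf : [a,b] <:+: ([0,7,4,0,1,0,3,0,5,0,2] : List (Fin 8))) :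
    ∃ v, v <:+: ([0,7,4,0,1,0,3,0,5,0,2] : List (Fin 8)) ∧
      ∃ i, [x, x + d] = sigmaW^[i] v := by
  refine ⟨[a, b], hinf, (x - a).val, ?_⟩
  rw [sigma_iterate]
  simp only [List.map_cons, List.map_nil, Fin.cast_val_eq_self]
  rw [← hd]
  have e1 : a + (x - a) = x := by ring
  have e2 : b + (x - a) = x + (b - a) := by ring
  rw [e1, e2]

theorem stmt11 (t : ℕ) (u : List (Fin 8))
    (hfac : FactorFP u) (hg : g^[t] u.length ≤ 2) :
    ∃ v : List (Fin 8), v <:+: (fIter (13 ^ t * 11)).take (13 ^ t * 11) ∧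
      ∃ i : ℕ, u = sigmaW^[i] v := by
  induction t generalizing u with
  | zero =>
    simp only [Function.iterate_zero_apply] at hg
    rw [pre_zero]
    rcases u with _ | ⟨x, _ | ⟨y, _ | ⟨z, u⟩⟩⟩
    · exact ⟨[], List.nil_infix, 0, rfl⟩
    · refine ⟨[0], by decide, x.val, ?_⟩
      rw [sigma_iterate]
      simp [Fin.cast_val_eq_self]
    · obtain ⟨n, hn⟩ := hfac
      have hS := pair_fIter n x y hn
      obtain ⟨d, rfl⟩ : ∃ d, y = x + d := ⟨y - x, by ring⟩
      have hS' : d ∈ Sset := by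
        have : x + d - x = d := by ring
        rwa [this] at hS
      fin_cases d
      · simp [Sset] at hS'
      · exact pair_case x _ 0 1 (by decide) (by decide)
      · exact pair_case x _ 0 2 (by decide) (by decide)
      · exact pair_case x _ 0 3 (by decide) (by decide)
      · exact pair_case x _ 4 0 (by decide) (by decide)
      · exact pair_case x _ 0 5 (by decide) (by decide)
      · simp [Sset] at hS'
      · exact pair_case x _ 0 7 (by decide) (by decide)
    · simp at hg
  | succ t ih =>
    rw [Function.iterate_succ_apply] at hg
    obtain ⟨u', hfac', hinf, hlen⟩ := decompFP u hfac
    have hg' : g^[t] u'.length ≤ 2 := by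
      have mono : Monotone g := fun a b h => Nat.div_le_div_right (by omega)
      exact le_trans (mono.iterate t hlen) hg
    obtain ⟨v', hv'inf, i, rfl⟩ := ih u' hfac' hg'
    rw [fW_sigma_iter] at hinf
    set j := 8 - i % 8 with hj
    have hij : (i + j) % 8 = 0 := by omega
    have hji : (j + i) % 8 = 0 := by omega
    refine ⟨sigmaW^[j] u, ?_, i, (sigma_cancel hij _).symm⟩
    rw [← fW_pre t]
    have h1 : sigmaW^[j] u <:+: sigmaW^[j] (sigmaW^[i] (fW v')) := sigma_infix j hinf
    rw [sigma_cancel hji] at h1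
    exact h1.trans (fW_infix hv'inf)
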